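/- Let H ≥ 0 and C > 2(H + √(1+H²)) be real numbers, and set t₁ = √((C − 2H − √(C² − 4CH − 4))/(2(1+H²))) and t₂ = √((C − 2H + √(C² − 4CH − 4))/(2(1+H²))). Then 0 < t₁ < t₂, the polynomial ξ(s) = C·s² − 1 − (1+H²)s⁴ − 2H·s² satisfies ξ(t₁) = ξ(t₂) = 0 and ξ(s) > 0 for all s ∈ (t₁, t₂), and the function g(t) = √(((C − 2H) + √(C² − 4CH − 4)·sin(2√(1+H²)·t))/(2(1+H²))) takes values in [t₁, t₂], with minimum value t₁ and maximum value t₂. -/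

import Mathlib

open Real Set

set_option maxHeartbeats 1000000

/-- For `H ≥ 0`, `C > 2(H+√(1+H²))`, the numbers
`t₁ = √((C−2H−√(C²−4CH−4))/(2(1+H²)))` and `t₂ = √((C−2H+√(C²−4CH−4))/(2(1+H²)))`
satisfy `0 < t₁ < t₂`, are zeros of `ξ s = Cs² − 1 − (1+H²)s⁴ − 2Hs²` with `ξ > 0` on
`(t₁, t₂)`, and the explicit periodic solution `g` takes values in `[t₁, t₂]`,
attaining both `t₁` and `t₂`. -/
theorem stmt_7 (H C : ℝ) (hH : 0 ≤ H) (hC : 2 * (H + Real.sqrt (1 + H ^ 2)) < C)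
    (t₁ t₂ : ℝ)
    (ht₁ : t₁ = Real.sqrt ((C - 2 * H - Real.sqrt (C ^ 2 - 4 * C * H - 4))
      / (2 * (1 + H ^ 2))))
    (ht₂ : t₂ = Real.sqrt ((C - 2 * H + Real.sqrt (C ^ 2 - 4 * C * H - 4))
      / (2 * (1 + H ^ 2))))
    (ξ : ℝ → ℝ)
    (hξ : ξ = fun s : ℝ => C * s ^ 2 - 1 - (1 + H ^ 2) * s ^ 4 - 2 * H * s ^ 2)
    (g : ℝ → ℝ)
    (hg : g = fun t : ℝ => Real.sqrt (((C - 2 * H) + Real.sqrt (C ^ 2 - 4 * C * H - 4)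
      * Real.sin (2 * Real.sqrt (1 + H ^ 2) * t)) / (2 * (1 + H ^ 2)))) :
    0 < t₁ ∧ t₁ < t₂ ∧ ξ t₁ = 0 ∧ ξ t₂ = 0 ∧ (∀ s ∈ Set.Ioo t₁ t₂, 0 < ξ s) ∧
    (∀ t, g t ∈ Set.Icc t₁ t₂) ∧ (∃ t, g t = t₁) ∧ (∃ t, g t = t₂) := by
  have ha : (0:ℝ) < 1 + H ^ 2 := by positivity
  have hsa : (0:ℝ) < Real.sqrt (1 + H ^ 2) := Real.sqrt_pos.2 ha
  have hsa2 : Real.sqrt (1 + H ^ 2) ^ 2 = 1 + H ^ 2 := Real.sq_sqrt ha.le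
  have hK : 2 * Real.sqrt (1 + H ^ 2) < C - 2 * H := by linarith
  have hKpos : 0 < C - 2 * H := by linarith
  have hDpos : 0 < C ^ 2 - 4 * C * H - 4 := by nlinarith [hsa2, hK, hsa]
  have hsD : Real.sqrt (C ^ 2 - 4 * C * H - 4) ^ 2 = C ^ 2 - 4 * C * H - 4 :=
    Real.sq_sqrt hDpos.le
  have hsDpos : 0 < Real.sqrt (C ^ 2 - 4 * C * H - 4) := Real.sqrt_pos.2 hDpos
  have hsDlt : Real.sqrt (C ^ 2 - 4 * C * H - 4) < C - 2 * H := by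
    nlinarith [hsD, hsDpos, hsa2]
  have hu1pos : 0 < (C - 2 * H - Real.sqrt (C ^ 2 - 4 * C * H - 4)) / (2 * (1 + H ^ 2)) :=
    div_pos (by linarith) (by linarith)
  have hu2pos : 0 < (C - 2 * H + Real.sqrt (C ^ 2 - 4 * C * H - 4)) / (2 * (1 + H ^ 2)) :=
    div_pos (by linarith) (by linarith)
  have h1 : t₁ ^ 2 = (C - 2 * H - Real.sqrt (C ^ 2 - 4 * C * H - 4)) / (2 * (1 + H ^ 2)) := by
    rw [ht₁]; exact Real.sq_sqrt hu1pos.le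
  have h2 : t₂ ^ 2 = (C - 2 * H + Real.sqrt (C ^ 2 - 4 * C * H - 4)) / (2 * (1 + H ^ 2)) := by
    rw [ht₂]; exact Real.sq_sqrt hu2pos.le
  have ht1pos : 0 < t₁ := by rw [ht₁]; exact Real.sqrt_pos.2 hu1pos
  have ht1t2 : t₁ < t₂ := by
    rw [ht₁, ht₂]
    apply Real.sqrt_lt_sqrt hu1pos.le
    rw [div_lt_div_iff₀ (by linarith) (by linarith)]
    nlinarith
  have hsum : (1 + H ^ 2) * (t₁ ^ 2 + t₂ ^ 2) = C - 2 * H := by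
    rw [h1, h2]; field_simp; ring
  have hprod : (1 + H ^ 2) * (t₁ ^ 2 * t₂ ^ 2) = 1 := by
    rw [h1, h2]
    field_simp
    rw [show C * (C - H * 4) - 4 = C ^ 2 - 4 * C * H - 4 by ring]
    linear_combination (-1) * hsD
  have key : ∀ s : ℝ, ξ s = (1 + H ^ 2) * (s ^ 2 - t₁ ^ 2) * (t₂ ^ 2 - s ^ 2) := by
    intro s
    rw [hξ]
    simp only
    linear_combination (-(s ^ 2)) * hsum + hprod
  have hx1 : ξ t₁ = 0 := by rw [key]; ring
  have hx2 : ξ t₂ = 0 := by rw [key]; ring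
  refine ⟨ht1pos, ht1t2, hx1, hx2, ?_, ?_, ?_, ?_⟩
  · intro s hs
    obtain ⟨hs1, hs2⟩ := hs
    rw [key]
    have hspos : 0 < s := lt_trans ht1pos hs1
    have e1 : t₁ ^ 2 < s ^ 2 := by nlinarith
    have e2 : s ^ 2 < t₂ ^ 2 := by nlinarith
    have := mul_pos (mul_pos ha (by linarith : (0:ℝ) < s ^ 2 - t₁ ^ 2))
      (by linarith : (0:ℝ) < t₂ ^ 2 - s ^ 2)
    linarith
  · intro t
    rw [hg, ht₁, ht₂]
    simp only
    have hs1 := Real.neg_one_le_sin (2 * Real.sqrt (1 + H ^ 2) * t)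
    have hs2 := Real.sin_le_one (2 * Real.sqrt (1 + H ^ 2) * t)
    have m1 : Real.sqrt (C ^ 2 - 4 * C * H - 4) * (-1) ≤
        Real.sqrt (C ^ 2 - 4 * C * H - 4) * Real.sin (2 * Real.sqrt (1 + H ^ 2) * t) :=
      mul_le_mul_of_nonneg_left hs1 hsDpos.le
    have m2 : Real.sqrt (C ^ 2 - 4 * C * H - 4) * Real.sin (2 * Real.sqrt (1 + H ^ 2) * t) ≤
        Real.sqrt (C ^ 2 - 4 * C * H - 4) * 1 :=
      mul_le_mul_of_nonneg_left hs2 hsDpos.le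
    constructor
    · apply Real.sqrt_le_sqrt
      gcongr
      all_goals linarith
    · apply Real.sqrt_le_sqrt
      gcongr
      all_goals linarith
  · refine ⟨-(Real.pi / 2) / (2 * Real.sqrt (1 + H ^ 2)), ?_⟩
    rw [hg, ht₁]
    simp only
    have hne : 2 * Real.sqrt (1 + H ^ 2) ≠ 0 := by positivity
    have heq : 2 * Real.sqrt (1 + H ^ 2) * (-(Real.pi / 2) / (2 * Real.sqrt (1 + H ^ 2)))
        = -(Real.pi / 2) := by rw [mul_comm]; exact div_mul_cancel₀ _ hne
    rw [heq, Real.sin_neg, Real.sin_pi_div_two]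
    ring_nf
  · refine ⟨(Real.pi / 2) / (2 * Real.sqrt (1 + H ^ 2)), ?_⟩
    rw [hg, ht₂]
    simp only
    have hne : 2 * Real.sqrt (1 + H ^ 2) ≠ 0 := by positivity
    have heq : 2 * Real.sqrt (1 + H ^ 2) * (Real.pi / 2 / (2 * Real.sqrt (1 + H ^ 2)))
        = Real.pi / 2 := by rw [mul_comm]; exact div_mul_cancel₀ _ hne
    rw [heq, Real.sin_pi_div_two]
    ring_nf
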